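/- Let $(X,\sigma_X)$ be an irreducible one-sided shift of finite type, $Y$ a subshift, $\pi: X\to Y$ a one-block factor map, $f \in C(X)$, and suppose $\mu$ is a $\sigma_X$-invariant weak Gibbs measure for $f$, i.e. there exist $C_n > 0$ with $\frac1n \log C_n \to 0$ and $1/C_n \le \mu[x_1\dots x_n]/e^{-nP(f)+(S_nf)(x)} \le C_n$ for all $x$. Then the pushforward $\pi\mu$ is a $\sigma_Y$-invariant weak Gibbs measure for the subadditive sequence $\mathcal G = \{\log g_n\}$ on $Y$: $P(f) = P(\mathcal G)$ and $\frac{1}{C_n M_n} \le \pi\mu[y_1\dots y_n]/(e^{-nP(\mathcal G)}g_n(y)) \le C_n M_n$ for all $y \in [y_1\dots y_n]$, where $M_n$ are the variation constants of $f$. -/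

import Mathlib

open Filter Topology MeasureTheory

/-- The shift map on the full one-sided shift on `k` symbols. -/
def shiftMap {k : ℕ} : (ℕ → Fin k) → (ℕ → Fin k) := fun x n => x (n + 1)

/-- A one-sided subshift: a closed, shift-invariant subset of the full shift. -/
def IsSubshift {k : ℕ} (X : Set (ℕ → Fin k)) : Prop :=
  IsClosed X ∧ ∀ x ∈ X, shiftMap x ∈ X

/-- Birkhoff sum `S_n h = ∑_{i<n} h ∘ T^i`. -/
noncomputable def birk {α : Type*} (T : α → α) (h : α → ℝ) (n : ℕ) (x : α) : ℝ :=
  ∑ i ∈ Finset.range n, h (T^[i] x)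

/-- The word `u` of length `n` appears in (is allowable for) the subshift `X`. -/
def WordIn {k : ℕ} (X : Set (ℕ → Fin k)) {n : ℕ} (u : Fin n → Fin k) : Prop :=
  ∃ x ∈ X, ∀ i : Fin n, x (i : ℕ) = u i

/-- The cylinder set of the word `u` inside the subshift `X`. -/
def cylSet {k : ℕ} (X : Set (ℕ → Fin k)) {n : ℕ} (u : Fin n → Fin k) : Set X :=
  {x : X | ∀ i : Fin n, (x : ℕ → Fin k) (i : ℕ) = u i}

/-- The periodic sequence `(u)^∞` obtained by repeating the word `u`. -/
def periodize {k p : ℕ} (hp : 0 < p) (u : Fin p → Fin k) : ℕ → Fin k :=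
  fun i => u ⟨i % p, Nat.mod_lt i hp⟩

/-- A sequence `{log f_n}` is asymptotically additive on the subshift `X` (with shift `σ`)
if for every `ε > 0` there is a continuous `ρ` with
`limsup_n (1/n)‖log f_n - S_n ρ‖_∞ < ε`. -/
def AsympAdd {k : ℕ} (X : Set (ℕ → Fin k)) (σ : X → X) (f : ℕ → X → ℝ) : Prop :=
  ∀ ε : ℝ, 0 < ε → ∃ ρ : X → ℝ, Continuous ρ ∧
    Filter.limsup
      (fun n : ℕ => (1 / (n : ℝ)) * ⨆ x : X, |Real.log (f n x) - birk σ ρ n x|)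
      Filter.atTop < ε

/-- `X` is a one-step shift of finite type, given by a transition relation on symbols. -/
def IsSFT {k : ℕ} (X : Set (ℕ → Fin k)) : Prop :=
  ∃ A : Fin k → Fin k → Prop, X = {x | ∀ i : ℕ, A (x i) (x (i + 1))}

/-- `X` is an irreducible subshift: any two allowable words can be joined. -/
def IrreducibleSubshift {k : ℕ} (X : Set (ℕ → Fin k)) : Prop :=
  ∀ (n m : ℕ) (u : Fin n → Fin k) (v : Fin m → Fin k), WordIn X u → WordIn X v →
    ∃ (q : ℕ) (w : Fin q → Fin k), WordIn X (Fin.append (Fin.append u w) v)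

/-- The cylinder of the first `n` coordinates of a point `x` of the subshift. -/
def cylPt {k : ℕ} (X : Set (ℕ → Fin k)) (x : X) (n : ℕ) : Set X :=
  {y : X | ∀ i < n, (y : ℕ → Fin k) i = (x : ℕ → Fin k) i}

/-- Topological pressure of the (sub)additive sequence `{log f_n}` on the subshift `X`:
`P(𝓕) = limsup_n (1/n) log ∑_{u ∈ B_n} sup_{[u]} f_n`. -/
noncomputable def seqPressure {k : ℕ} (X : Set (ℕ → Fin k)) (f : ℕ → X → ℝ) : ℝ :=
  Filter.limsup
    (fun n : ℕ => (1 / (n : ℝ)) *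
      Real.log (∑ u : Fin n → Fin k, sSup ((f n) '' cylSet X u)))
    Filter.atTop

/-- Measure-theoretic entropy of a measure on a one-sided subshift, computed with the
canonical generating partition into cylinders. -/
noncomputable def mEntropy {k : ℕ} (X : Set (ℕ → Fin k)) (μ : MeasureTheory.Measure X) : ℝ :=
  Filter.liminf
    (fun n : ℕ => (1 / (n : ℝ)) *
      ∑ u : Fin n → Fin k, Real.negMulLog ((μ (cylSet X u)).toReal))
    Filter.atTop

-- The standard metric on the full shift: `d(x,y) = (1/2)^{min{i : x_i ≠ y_i}}`.
open Classical in
noncomputable def dSeq {k : ℕ} (x y : ℕ → Fin k) : ℝ :=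
  if x = y then 0 else (1 / 2 : ℝ) ^ (sInf {i : ℕ | x i ≠ y i})

/-- `P_n(σ, π, f, δ)(y)`: supremum of `∑_{x ∈ E} e^{S_n f(x)}` over `(n,δ)`-separated
subsets `E` of the fiber `π⁻¹(y)`. -/
noncomputable def relPn {k l : ℕ} (X : Set (ℕ → Fin k)) (σ : X → X)
    (πs : X → (ℕ → Fin l)) (f : X → ℝ) (n : ℕ) (δ : ℝ) (y : ℕ → Fin l) : ℝ :=
  sSup {s : ℝ | ∃ E : Finset X, (∀ x ∈ E, πs x = y) ∧
    (∀ x ∈ E, ∀ x' ∈ E, x ≠ x' →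
      ∃ i < n, δ ≤ dSeq ((σ^[i] x : X) : ℕ → Fin k) ((σ^[i] x' : X) : ℕ → Fin k)) ∧
    s = ∑ x ∈ E, Real.exp (birk σ f n x)}

/-- The relative pressure function `P(σ, π, f) : (ℕ → Fin l) → ℝ` of `f`. -/
noncomputable def relP {k l : ℕ} (X : Set (ℕ → Fin k)) (σ : X → X)
    (πs : X → (ℕ → Fin l)) (f : X → ℝ) (y : ℕ → Fin l) : ℝ :=
  ⨆ δ : {δ : ℝ // 0 < δ},
    Filter.limsup (fun n : ℕ => (1 / (n : ℝ)) * Real.log (relPn X σ πs f n δ.1 y))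
      Filter.atTop

/-- `g_n(y) = sup_{E_n(y)} ∑_{x ∈ E_n(y)} e^{S_n f(x)}`, where `E_n(y)` consists of exactly
one point from each cylinder `[x_1…x_n]` of `X` whose word is mapped by the one-block map
to `y_1…y_n`. -/
noncomputable def gfun {k l : ℕ} (X : Set (ℕ → Fin k)) (σ : X → X)
    (πs : X → (ℕ → Fin l)) (f : X → ℝ) (n : ℕ) (y : ℕ → Fin l) : ℝ :=
  sSup {s : ℝ | ∃ E : Finset X,
    (∀ x ∈ E, ∀ i : Fin n, πs x (i : ℕ) = y (i : ℕ)) ∧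
    (∀ x ∈ E, ∀ x' ∈ E, (∀ i : Fin n, (x : ℕ → Fin k) (i : ℕ) = (x' : ℕ → Fin k) (i : ℕ)) →
      x = x') ∧
    (∀ u : Fin n → Fin k,
      (∃ z : X, (∀ i : Fin n, (z : ℕ → Fin k) (i : ℕ) = u i) ∧
        ∀ i : Fin n, πs z (i : ℕ) = y (i : ℕ)) →
      ∃ x ∈ E, ∀ i : Fin n, (x : ℕ → Fin k) (i : ℕ) = u i) ∧
    s = ∑ x ∈ E, Real.exp (birk σ f n x)}

/-- The variation constant `M_n` of `f`:
`M_n = sup { e^{S_n f(x)} / e^{S_n f(x')} : x_i = x'_i for 1 ≤ i ≤ n }`. -/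
noncomputable def varConst {k : ℕ} (X : Set (ℕ → Fin k)) (σ : X → X) (f : X → ℝ)
    (n : ℕ) : ℝ :=
  sSup {r : ℝ | ∃ x x' : X, (∀ i : Fin n, (x : ℕ → Fin k) (i : ℕ) = (x' : ℕ → Fin k) (i : ℕ)) ∧
    r = Real.exp (birk σ f n x) / Real.exp (birk σ f n x')}

/-- `min_{0 ≤ q ≤ p} min_x e^{S_q f (x)}`. -/
noncomputable def minConst {k : ℕ} (X : Set (ℕ → Fin k)) (σ : X → X) (f : X → ℝ)
    (p : ℕ) : ℝ :=
  sInf {r : ℝ | ∃ q ≤ p, ∃ x : X, r = Real.exp (birk σ f q x)}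

section Aux
variable {k : ℕ} {X : Set (ℕ → Fin k)}

lemma iter_coord (σX : X → X) (hσX : ∀ x : X, (σX x : ℕ → Fin k) = shiftMap (x : ℕ → Fin k)) :
    ∀ (i : ℕ) (x : X) (j : ℕ), ((σX^[i] x : X) : ℕ → Fin k) j = (x : ℕ → Fin k) (j + i) := by
  intro i
  induction i with
  | zero => intro x j; simp
  | succ m ih =>
    intro x j
    rw [Function.iterate_succ_apply, ih (σX x) j, hσX x]
    simp [shiftMap]; ring_nf

lemma exists_bound (hX : IsClosed X) (f : X → ℝ) (hf : Continuous f) :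
    ∃ b : ℝ, 0 ≤ b ∧ ∀ x : X, |f x| ≤ b := by
  haveI : CompactSpace X := isCompact_iff_compactSpace.mp hX.isCompact
  obtain ⟨b, hb⟩ := (isCompact_range (hf.abs)).bddAbove
  refine ⟨max b 0, le_max_right _ _, fun x => le_trans (hb ⟨x, rfl⟩) (le_max_left _ _)⟩

lemma varUC (hX : IsClosed X) (f : X → ℝ) (hf : Continuous f) (ε : ℝ) (hε : 0 < ε) :
    ∃ N : ℕ, ∀ x x' : X, (∀ i < N, (x : ℕ → Fin k) i = (x' : ℕ → Fin k) i) → |f x - f x'| ≤ ε := by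
  haveI : CompactSpace X := isCompact_iff_compactSpace.mp hX.isCompact
  -- for each x, find N_x with cylinder ⊆ {|f · - f x| < ε/2}
  have key : ∀ x : X, ∃ N : ℕ, ∀ y : X, (∀ i < N, (y : ℕ → Fin k) i = (x : ℕ → Fin k) i) →
      |f y - f x| < ε / 2 := by
    intro x
    have h1 : {y : X | |f y - f x| < ε / 2} ∈ 𝓝 x := by
      have : Continuous fun y : X => |f y - f x| := (hf.sub continuous_const).abs
      exact (this.tendsto x).eventually_lt_const (by simpa using half_pos hε) |>.mono (fun y h => h)
    rw [nhds_subtype] at h1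
    obtain ⟨s, hs, hsub⟩ := h1
    rw [nhds_pi] at hs
    rw [Filter.mem_pi] at hs
    obtain ⟨I, hIfin, t, ht, hIt⟩ := hs
    obtain ⟨N, hN⟩ := hIfin.bddAbove
    refine ⟨N + 1, fun y hy => hsub ?_⟩
    refine hIt (fun i hi => ?_)
    have : i ≤ N := hN hi
    rw [hy i (by omega)]
    have := ht i
    simpa [nhds_discrete] using this
  choose N hN using key
  -- open cover
  have hopen : ∀ x : X, IsOpen {y : X | ∀ i < N x, (y : ℕ → Fin k) i = (x : ℕ → Fin k) i} := by
    intro x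
    have heq : {y : X | ∀ i < N x, (y : ℕ → Fin k) i = (x : ℕ → Fin k) i} =
        ⋂ i : Fin (N x), {y : X | (y : ℕ → Fin k) (i : ℕ) = (x : ℕ → Fin k) (i : ℕ)} := by
      ext y
      simp only [Set.mem_iInter, Set.mem_setOf_eq]
      exact ⟨fun h i => h i i.2, fun h i hi => h ⟨i, hi⟩⟩
    rw [heq]
    apply isOpen_iInter_of_finite (ι := Fin (N x))
      (s := fun i => {y : X | (y : ℕ → Fin k) (i : ℕ) = (x : ℕ → Fin k) (i : ℕ)})
    intro i
    exact IsOpen.preimage ((continuous_apply (A := fun _ : ℕ => Fin k) (i : ℕ)).comp continuous_subtype_val)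
      (isOpen_discrete {(x : ℕ → Fin k) (i : ℕ)})
  obtain ⟨t, ht⟩ := isCompact_univ.elim_finite_subcover
    (fun x : X => {y : X | ∀ i < N x, (y : ℕ → Fin k) i = (x : ℕ → Fin k) i}) hopen
    (fun x _ => Set.mem_iUnion.mpr ⟨x, fun i _ => rfl⟩)
  refine ⟨t.sup N, fun x x' hxx => ?_⟩
  obtain ⟨z, hz, hxz⟩ := Set.mem_iUnion₂.mp (ht (Set.mem_univ x))
  have hNz : N z ≤ t.sup N := Finset.le_sup hz
  have hx'z : ∀ i < N z, (x' : ℕ → Fin k) i = (z : ℕ → Fin k) i := by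
    intro i hi
    rw [← hxx i (lt_of_lt_of_le hi hNz)]
    exact hxz i hi
  have h1 := hN z x hxz
  have h2 := hN z x' hx'z
  calc |f x - f x'| ≤ |f x - f z| + |f z - f x'| := abs_sub_le _ _ _
    _ ≤ ε / 2 + ε / 2 := by rw [abs_sub_comm (f z)]; exact add_le_add h1.le h2.le
    _ = ε := by ring

end Aux



open Classical in
/-- The set of admissible words of length `n` over `y`. -/
noncomputable def admisF {k l : ℕ} (X : Set (ℕ → Fin k)) (τ : Fin k → Fin l) (n : ℕ)
    (y : ℕ → Fin l) : Finset (Fin n → Fin k) :=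
  Finset.univ.filter (fun u => (cylSet X u).Nonempty ∧ ∀ i : Fin n, τ (u i) = y (i : ℕ))

open Classical in
/-- A choice of representative point in each nonempty cylinder. -/
noncomputable def repP {k : ℕ} (X : Set (ℕ → Fin k)) [Nonempty ↥X] {n : ℕ}
    (u : Fin n → Fin k) : ↥X :=
  if h : (cylSet X u).Nonempty then h.some else Classical.arbitrary ↥X

section Aux2
variable {k l : ℕ} {X : Set (ℕ → Fin k)}

lemma repP_mem [Nonempty ↥X] {n : ℕ} {u : Fin n → Fin k} (h : (cylSet X u).Nonempty) :
    repP X u ∈ cylSet X u := by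
  classical
  rw [repP]
  split
  · exact Set.Nonempty.some_mem _
  · exact absurd h (by assumption)

lemma mem_admisF {τ : Fin k → Fin l} {n : ℕ} {y : ℕ → Fin l} {u : Fin n → Fin k} :
    u ∈ admisF X τ n y ↔ (cylSet X u).Nonempty ∧ ∀ i : Fin n, τ (u i) = y (i : ℕ) := by
  simp [admisF]

lemma birk_abs_le (σX : X → X) (f : X → ℝ) {b : ℝ} (hb : ∀ x : X, |f x| ≤ b) (n : ℕ) (x : X) :
    |birk σX f n x| ≤ n * b := by
  calc |birk σX f n x| ≤ ∑ i ∈ Finset.range n, |f (σX^[i] x)| := Finset.abs_sum_le_sum_abs _ _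
    _ ≤ ∑ i ∈ Finset.range n, b := Finset.sum_le_sum (fun i _ => hb _)
    _ = n * b := by simp [mul_comm]

lemma varConst_bddAbove (σX : X → X) (f : X → ℝ) {b : ℝ} (hb : ∀ x : X, |f x| ≤ b) (n : ℕ) :
    BddAbove {r : ℝ | ∃ x x' : X,
      (∀ i : Fin n, (x : ℕ → Fin k) (i : ℕ) = (x' : ℕ → Fin k) (i : ℕ)) ∧
      r = Real.exp (birk σX f n x) / Real.exp (birk σX f n x')} := by
  refine ⟨Real.exp (2 * (n * b)), ?_⟩
  rintro r ⟨x, x', -, rfl⟩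
  rw [← Real.exp_sub]
  apply Real.exp_le_exp.mpr
  have h1 := abs_le.mp (birk_abs_le σX f hb n x)
  have h2 := abs_le.mp (birk_abs_le σX f hb n x')
  linarith [h1.1, h1.2, h2.1, h2.2]

lemma one_le_varConst [Nonempty ↥X] (σX : X → X) (f : X → ℝ) {b : ℝ} (hb : ∀ x : X, |f x| ≤ b)
    (n : ℕ) : 1 ≤ varConst X σX f n := by
  have hx : ∃ x : X, True := ⟨Classical.arbitrary _, trivial⟩
  obtain ⟨x, -⟩ := hx
  apply le_csSup (varConst_bddAbove σX f hb n)
  exact ⟨x, x, fun i => rfl, by rw [div_self (Real.exp_ne_zero _)]⟩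

lemma exp_birk_le_varConst_mul (σX : X → X) (f : X → ℝ) {b : ℝ} (hb : ∀ x : X, |f x| ≤ b)
    (n : ℕ) (x x' : X)
    (h : ∀ i : Fin n, (x : ℕ → Fin k) (i : ℕ) = (x' : ℕ → Fin k) (i : ℕ)) :
    Real.exp (birk σX f n x) ≤ varConst X σX f n * Real.exp (birk σX f n x') := by
  have hmem : Real.exp (birk σX f n x) / Real.exp (birk σX f n x') ∈
      {r : ℝ | ∃ x x' : X, (∀ i : Fin n, (x : ℕ → Fin k) (i : ℕ) = (x' : ℕ → Fin k) (i : ℕ)) ∧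
        r = Real.exp (birk σX f n x) / Real.exp (birk σX f n x')} := ⟨x, x', h, rfl⟩
  have hle := le_csSup (varConst_bddAbove σX f hb n) hmem
  have hpos : (0:ℝ) < Real.exp (birk σX f n x') := Real.exp_pos _
  calc Real.exp (birk σX f n x)
      = Real.exp (birk σX f n x) / Real.exp (birk σX f n x') * Real.exp (birk σX f n x') := by
        field_simp
    _ ≤ varConst X σX f n * Real.exp (birk σX f n x') :=
        mul_le_mul_of_nonneg_right hle hpos.le

end Aux2

section Aux3
variable {k l : ℕ} {X : Set (ℕ → Fin k)}

/-- The defining set of `gfun`. -/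
def gSet {k l : ℕ} (X : Set (ℕ → Fin k)) (σ : X → X) (πs : X → (ℕ → Fin l)) (f : X → ℝ)
    (n : ℕ) (y : ℕ → Fin l) : Set ℝ :=
  {s : ℝ | ∃ E : Finset X,
    (∀ x ∈ E, ∀ i : Fin n, πs x (i : ℕ) = y (i : ℕ)) ∧
    (∀ x ∈ E, ∀ x' ∈ E, (∀ i : Fin n, (x : ℕ → Fin k) (i : ℕ) = (x' : ℕ → Fin k) (i : ℕ)) →
      x = x') ∧
    (∀ u : Fin n → Fin k,
      (∃ z : X, (∀ i : Fin n, (z : ℕ → Fin k) (i : ℕ) = u i) ∧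
        ∀ i : Fin n, πs z (i : ℕ) = y (i : ℕ)) →
      ∃ x ∈ E, ∀ i : Fin n, (x : ℕ → Fin k) (i : ℕ) = u i) ∧
    s = ∑ x ∈ E, Real.exp (birk σ f n x)}

lemma gfun_eq_sSup_gSet (σ : X → X) (πs : X → (ℕ → Fin l)) (f : X → ℝ) (n : ℕ)
    (y : ℕ → Fin l) : gfun X σ πs f n y = sSup (gSet X σ πs f n y) := rfl

variable [Nonempty ↥X] (σX : X → X) (f : X → ℝ) (τ : Fin k → Fin l) (πs : X → (ℕ → Fin l))

lemma gSet_mem_rep (hτ : ∀ (x : X) (i : ℕ), πs x i = τ ((x : ℕ → Fin k) i))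
    (n : ℕ) (y : ℕ → Fin l) :
    (∑ u ∈ admisF X τ n y, Real.exp (birk σX f n (repP X u))) ∈ gSet X σX πs f n y := by
  classical
  have hword : ∀ u ∈ admisF X τ n y, ∀ i : Fin n, ((repP X u : X) : ℕ → Fin k) (i : ℕ) = u i :=
    fun u hu => repP_mem (mem_admisF.mp hu).1
  have hinj : ∀ u ∈ admisF X τ n y, ∀ u' ∈ admisF X τ n y, repP X u = repP X u' → u = u' := by
    intro u hu u' hu' h
    funext i
    rw [← hword u hu i, h, hword u' hu' i]
  refine ⟨(admisF X τ n y).image (repP X), ?_, ?_, ?_, ?_⟩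
  · intro x hx i
    obtain ⟨u, hu, rfl⟩ := Finset.mem_image.mp hx
    rw [hτ, hword u hu i, (mem_admisF.mp hu).2 i]
  · intro x hx x' hx' hww
    obtain ⟨u, hu, rfl⟩ := Finset.mem_image.mp hx
    obtain ⟨u', hu', rfl⟩ := Finset.mem_image.mp hx'
    congr 1
    funext i
    rw [← hword u hu i, hww i, hword u' hu' i]
  · intro u ⟨z, hz1, hz2⟩
    have hu : u ∈ admisF X τ n y := by
      rw [mem_admisF]
      exact ⟨⟨z, hz1⟩, fun i => by rw [← hz1 i, ← hτ]; exact hz2 i⟩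
    exact ⟨repP X u, Finset.mem_image_of_mem _ hu, hword u hu⟩
  · rw [Finset.sum_image hinj]

lemma gSet_le {b : ℝ} (hb : ∀ x : X, |f x| ≤ b)
    (hτ : ∀ (x : X) (i : ℕ), πs x i = τ ((x : ℕ → Fin k) i)) (n : ℕ) (y : ℕ → Fin l) :
    ∀ s ∈ gSet X σX πs f n y,
      s ≤ varConst X σX f n * ∑ u ∈ admisF X τ n y, Real.exp (birk σX f n (repP X u)) := by
  classical
  rintro s ⟨E, h1, h2, -, rfl⟩
  have hstep : ∀ x ∈ E,
      Real.exp (birk σX f n x) ≤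
        varConst X σX f n * Real.exp (birk σX f n (repP X (fun i : Fin n => (x : ℕ → Fin k) (i : ℕ)))) := by
    intro x hx
    apply exp_birk_le_varConst_mul σX f hb
    intro i
    exact (repP_mem (⟨x, fun i => rfl⟩ : (cylSet X (fun i : Fin n => (x : ℕ → Fin k) (i : ℕ))).Nonempty) i).symm
  calc ∑ x ∈ E, Real.exp (birk σX f n x)
      ≤ ∑ x ∈ E, varConst X σX f n *
          Real.exp (birk σX f n (repP X (fun i : Fin n => (x : ℕ → Fin k) (i : ℕ)))) :=
        Finset.sum_le_sum hstep
    _ = varConst X σX f n * ∑ x ∈ E,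
          Real.exp (birk σX f n (repP X (fun i : Fin n => (x : ℕ → Fin k) (i : ℕ)))) := by
        rw [Finset.mul_sum]
    _ ≤ varConst X σX f n * ∑ u ∈ admisF X τ n y, Real.exp (birk σX f n (repP X u)) := by
        apply mul_le_mul_of_nonneg_left _ (le_trans zero_le_one (one_le_varConst σX f hb n))
        have hwinj : ∀ x ∈ E, ∀ x' ∈ E,
            (fun i : Fin n => (x : ℕ → Fin k) (i : ℕ)) = (fun i : Fin n => (x' : ℕ → Fin k) (i : ℕ)) →
            x = x' := by
          intro x hx x' hx' h
          exact h2 x hx x' hx' (fun i => congrFun h i)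
        have heq : (∑ x ∈ E,
            Real.exp (birk σX f n (repP X (fun i : Fin n => (x : ℕ → Fin k) (i : ℕ))))) =
            ∑ u ∈ E.image (fun x : X => (fun i : Fin n => (x : ℕ → Fin k) (i : ℕ))),
              Real.exp (birk σX f n (repP X u)) :=
          (Finset.sum_image (s := E)
            (g := fun x : X => (fun i : Fin n => (x : ℕ → Fin k) (i : ℕ)))
            (f := fun u => Real.exp (birk σX f n (repP X u))) hwinj).symm
        rw [heq]
        apply Finset.sum_le_sum_of_subset_of_nonneg
        · intro u hu
          obtain ⟨x, hx, rfl⟩ := Finset.mem_image.mp hu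
          rw [mem_admisF]
          exact ⟨⟨x, fun i => rfl⟩, fun i => by rw [← hτ]; exact h1 x hx i⟩
        · intro u _ _
          positivity

lemma sum_rep_le_gfun {b : ℝ} (hb : ∀ x : X, |f x| ≤ b)
    (hτ : ∀ (x : X) (i : ℕ), πs x i = τ ((x : ℕ → Fin k) i)) (n : ℕ) (y : ℕ → Fin l) :
    (∑ u ∈ admisF X τ n y, Real.exp (birk σX f n (repP X u))) ≤ gfun X σX πs f n y :=
  le_csSup ⟨_, gSet_le σX f τ πs hb hτ n y⟩ (gSet_mem_rep σX f τ πs hτ n y)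

lemma gfun_le_var_mul_sum_rep {b : ℝ} (hb : ∀ x : X, |f x| ≤ b)
    (hτ : ∀ (x : X) (i : ℕ), πs x i = τ ((x : ℕ → Fin k) i)) (n : ℕ) (y : ℕ → Fin l) :
    gfun X σX πs f n y ≤
      varConst X σX f n * ∑ u ∈ admisF X τ n y, Real.exp (birk σX f n (repP X u)) := by
  apply Real.sSup_le (gSet_le σX f τ πs hb hτ n y)
  have h1 : (0:ℝ) ≤ varConst X σX f n := le_trans zero_le_one (one_le_varConst σX f hb n)
  have h2 : (0:ℝ) ≤ ∑ u ∈ admisF X τ n y, Real.exp (birk σX f n (repP X u)) :=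
    Finset.sum_nonneg (fun u _ => (Real.exp_pos _).le)
  positivity

end Aux3

section Aux4
variable {k l : ℕ} {X : Set (ℕ → Fin k)}

/-- sup of `e^{S_n f}` over a cylinder. -/
noncomputable def supU {k : ℕ} (X : Set (ℕ → Fin k)) (σX : X → X) (f : X → ℝ) {n : ℕ}
    (u : Fin n → Fin k) : ℝ :=
  sSup ((fun z : X => Real.exp (birk σX f n z)) '' cylSet X u)

variable (σX : X → X) (f : X → ℝ)

lemma supU_nonneg {n : ℕ} (u : Fin n → Fin k) : 0 ≤ supU X σX f u :=
  Real.sSup_nonneg (by rintro x ⟨z, -, rfl⟩; positivity)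

lemma supU_empty {n : ℕ} {u : Fin n → Fin k} (h : cylSet X u = ∅) : supU X σX f u = 0 := by
  rw [supU, h, Set.image_empty, Real.sSup_empty]

lemma exp_le_supU {b : ℝ} (hb : ∀ x : X, |f x| ≤ b) {n : ℕ} {u : Fin n → Fin k} {x : X}
    (hx : x ∈ cylSet X u) : Real.exp (birk σX f n x) ≤ supU X σX f u := by
  apply le_csSup
  · refine ⟨Real.exp (n * b), ?_⟩
    rintro r ⟨z, -, rfl⟩
    exact Real.exp_le_exp.mpr (abs_le.mp (birk_abs_le σX f hb n z)).2
  · exact ⟨x, hx, rfl⟩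

lemma supU_le_var_mul {b : ℝ} (hb : ∀ x : X, |f x| ≤ b) {n : ℕ} {u : Fin n → Fin k} {x : X}
    (hx : x ∈ cylSet X u) :
    supU X σX f u ≤ varConst X σX f n * Real.exp (birk σX f n x) := by
  apply Real.sSup_le
  · rintro r ⟨z, hz, rfl⟩
    apply exp_birk_le_varConst_mul σX f hb
    intro i
    rw [hz i, hx i]
  · have : (0:ℝ) ≤ varConst X σX f n := by
      rcases isEmpty_or_nonempty ↥X with h | h
      · exact absurd hx (by simp [Set.eq_empty_of_isEmpty (cylSet X u)])
      · exact le_trans zero_le_one (one_le_varConst σX f hb n)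
    positivity

lemma gfun_congr (πs : X → (ℕ → Fin l)) {n : ℕ} {y y' : ℕ → Fin l}
    (h : ∀ i : Fin n, y (i : ℕ) = y' (i : ℕ)) :
    gfun X σX πs f n y = gfun X σX πs f n y' := by
  rw [gfun_eq_sSup_gSet, gfun_eq_sSup_gSet]
  congr 1
  ext s
  constructor <;> rintro ⟨E, h1, h2, h3, rfl⟩
  · exact ⟨E, fun x hx i => by rw [h1 x hx i, h i], h2,
      fun u ⟨z, hz1, hz2⟩ => h3 u ⟨z, hz1, fun i => by rw [hz2 i, ← h i]⟩, rfl⟩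
  · exact ⟨E, fun x hx i => by rw [h1 x hx i, ← h i], h2,
      fun u ⟨z, hz1, hz2⟩ => h3 u ⟨z, hz1, fun i => by rw [hz2 i, h i]⟩, rfl⟩

/-- every element of gSet is at most the sum of cylinder sups over admissible words -/
lemma gSet_le_sumSup (τ : Fin k → Fin l) (πs : X → (ℕ → Fin l)) {b : ℝ} (hb : ∀ x : X, |f x| ≤ b)
    (hτ : ∀ (x : X) (i : ℕ), πs x i = τ ((x : ℕ → Fin k) i)) (n : ℕ) (y : ℕ → Fin l) :
    ∀ s ∈ gSet X σX πs f n y, s ≤ ∑ u ∈ admisF X τ n y, supU X σX f u := by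
  classical
  rintro s ⟨E, h1, h2, -, rfl⟩
  have hwinj : ∀ x ∈ E, ∀ x' ∈ E,
      (fun i : Fin n => (x : ℕ → Fin k) (i : ℕ)) = (fun i : Fin n => (x' : ℕ → Fin k) (i : ℕ)) →
      x = x' := fun x hx x' hx' h => h2 x hx x' hx' (fun i => congrFun h i)
  calc ∑ x ∈ E, Real.exp (birk σX f n x)
      ≤ ∑ x ∈ E, supU X σX f (fun i : Fin n => (x : ℕ → Fin k) (i : ℕ)) :=
        Finset.sum_le_sum (fun x _ => exp_le_supU σX f hb (fun i => rfl))
    _ = ∑ u ∈ E.image (fun x : X => (fun i : Fin n => (x : ℕ → Fin k) (i : ℕ))),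
          supU X σX f u :=
        (Finset.sum_image (s := E)
          (g := fun x : X => (fun i : Fin n => (x : ℕ → Fin k) (i : ℕ)))
          (f := fun u => supU X σX f u) hwinj).symm
    _ ≤ ∑ u ∈ admisF X τ n y, supU X σX f u := by
        apply Finset.sum_le_sum_of_subset_of_nonneg
        · intro u hu
          obtain ⟨x, hx, rfl⟩ := Finset.mem_image.mp hu
          rw [mem_admisF]
          exact ⟨⟨x, fun i => rfl⟩, fun i => by rw [← hτ]; exact h1 x hx i⟩
        · intro u _ _
          exact supU_nonneg σX f u

lemma gfun_le_sumSup [Nonempty ↥X] (τ : Fin k → Fin l) (πs : X → (ℕ → Fin l)) {b : ℝ}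
    (hb : ∀ x : X, |f x| ≤ b)
    (hτ : ∀ (x : X) (i : ℕ), πs x i = τ ((x : ℕ → Fin k) i)) (n : ℕ) (y : ℕ → Fin l) :
    gfun X σX πs f n y ≤ ∑ u ∈ admisF X τ n y, supU X σX f u :=
  Real.sSup_le (gSet_le_sumSup σX f τ πs hb hτ n y)
    (Finset.sum_nonneg (fun u _ => supU_nonneg σX f u))

lemma sumSup_le_var_mul_gfun [Nonempty ↥X] (τ : Fin k → Fin l) (πs : X → (ℕ → Fin l)) {b : ℝ}
    (hb : ∀ x : X, |f x| ≤ b)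
    (hτ : ∀ (x : X) (i : ℕ), πs x i = τ ((x : ℕ → Fin k) i)) (n : ℕ) (y : ℕ → Fin l) :
    (∑ u ∈ admisF X τ n y, supU X σX f u) ≤ varConst X σX f n * gfun X σX πs f n y := by
  calc ∑ u ∈ admisF X τ n y, supU X σX f u
      ≤ ∑ u ∈ admisF X τ n y, varConst X σX f n * Real.exp (birk σX f n (repP X u)) :=
        Finset.sum_le_sum (fun u hu => supU_le_var_mul σX f hb (repP_mem (mem_admisF.mp hu).1))
    _ = varConst X σX f n * ∑ u ∈ admisF X τ n y, Real.exp (birk σX f n (repP X u)) := by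
        rw [Finset.mul_sum]
    _ ≤ varConst X σX f n * gfun X σX πs f n y :=
        mul_le_mul_of_nonneg_left (sum_rep_le_gfun σX f τ πs hb hτ n y)
          (le_trans zero_le_one (one_le_varConst σX f hb n))

end Aux4

section Aux5
variable {k l : ℕ} {X : Set (ℕ → Fin k)} {Y : Set (ℕ → Fin l)}

lemma cylSet_measurable {n : ℕ} (u : Fin n → Fin k) : MeasurableSet (cylSet X u) := by
  have : cylSet X u = ⋂ i : Fin n,
      (fun x : X => (x : ℕ → Fin k) (i : ℕ)) ⁻¹' {u i} := by
    ext x; simp [cylSet, Set.mem_iInter]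
  rw [this]
  exact MeasurableSet.iInter (fun i =>
    ((measurable_pi_apply _).comp measurable_subtype_coe) (measurableSet_singleton _))

lemma cylPt_measurable (y : Y) (n : ℕ) : MeasurableSet (cylPt Y y n) := by
  have : cylPt Y y n = ⋂ i : Fin n,
      (fun y' : Y => (y' : ℕ → Fin l) (i : ℕ)) ⁻¹' {(y : ℕ → Fin l) (i : ℕ)} := by
    ext z
    simp only [cylPt, Set.mem_iInter, Set.mem_setOf_eq, Set.mem_preimage, Set.mem_singleton_iff]
    exact ⟨fun h i => h i i.2, fun h i hi => h ⟨i, hi⟩⟩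
  rw [this]
  exact MeasurableSet.iInter (fun i =>
    ((measurable_pi_apply _).comp measurable_subtype_coe) (measurableSet_singleton _))

lemma cylSet_eq_cylPt {n : ℕ} {u : Fin n → Fin k} {x : X} (hx : x ∈ cylSet X u) :
    cylSet X u = cylPt X x n := by
  ext z
  simp only [cylSet, cylPt, Set.mem_setOf_eq]
  constructor
  · intro h i hi
    rw [h ⟨i, hi⟩, hx ⟨i, hi⟩]
  · intro h i
    rw [h i i.2, ← hx i]

lemma map_cyl_eq_sum (π : X → Y) (hπm : Measurable π) (τ : Fin k → Fin l)
    (hτπ : ∀ (x : X) (i : ℕ), ((π x : Y) : ℕ → Fin l) i = τ ((x : ℕ → Fin k) i))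
    (μ : Measure X) [IsFiniteMeasure μ] (y : Y) (n : ℕ) :
    ((μ.map π) (cylPt Y y n)).toReal =
      ∑ u ∈ admisF X τ n (y : ℕ → Fin l), (μ (cylSet X u)).toReal := by
  classical
  rw [Measure.map_apply hπm (cylPt_measurable y n)]
  set F : Finset (Fin n → Fin k) :=
    Finset.univ.filter (fun u => ∀ i : Fin n, τ (u i) = (y : ℕ → Fin l) (i : ℕ)) with hF
  have hdecomp : π ⁻¹' cylPt Y y n = ⋃ u ∈ F, cylSet X u := by
    ext x
    simp only [Set.mem_preimage, cylPt, Set.mem_setOf_eq, Set.mem_iUnion, hF,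
      Finset.mem_filter, Finset.mem_univ, true_and, cylSet]
    constructor
    · intro h
      refine ⟨fun i => (x : ℕ → Fin k) (i : ℕ), fun i => ?_, fun i => rfl⟩
      rw [← hτπ x i, h i i.2]
    · rintro ⟨u, hu, hxu⟩ i hi
      rw [hτπ x i, hxu ⟨i, hi⟩, hu ⟨i, hi⟩]
  rw [hdecomp, measure_biUnion_finset ?_ (fun u _ => cylSet_measurable u)]
  · rw [ENNReal.toReal_sum (fun u _ => measure_ne_top μ _)]
    symm
    apply Finset.sum_subset
    · intro u hu
      rw [mem_admisF] at hu
      simp only [hF, Finset.mem_filter, Finset.mem_univ, true_and]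
      exact hu.2
    · intro u hu hnot
      have : cylSet X u = ∅ := by
        by_contra hne
        apply hnot
        rw [mem_admisF]
        simp only [hF, Finset.mem_filter, Finset.mem_univ, true_and] at hu
        exact ⟨Set.nonempty_iff_ne_empty.mpr hne, hu⟩
      rw [this]
      simp
  · intro u hu u' hu' huu
    rw [Function.onFun, Set.disjoint_left]
    intro x hx hx'
    apply huu
    funext i
    rw [← hx i, hx' i]

end Aux5

section Aux6
variable {k l : ℕ} {X : Set (ℕ → Fin k)} {Y : Set (ℕ → Fin l)}
variable (σX : X → X) (f : X → ℝ)

/-- Comparison of the partition sums of `X` and of `Y` (with `gfun`). -/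
lemma pressure_sum_comp [Nonempty ↥X] (π : X → Y) (τ : Fin k → Fin l)
    (hτπ : ∀ (x : X) (i : ℕ), ((π x : Y) : ℕ → Fin l) i = τ ((x : ℕ → Fin k) i))
    {b : ℝ} (hb : ∀ x : X, |f x| ≤ b) (n : ℕ) :
    (∑ v : Fin n → Fin l,
        sSup ((fun y : Y => gfun X σX (fun z => ((π z : Y) : ℕ → Fin l)) f n (y : ℕ → Fin l)) ''
          cylSet Y v)) ≤
      (∑ u : Fin n → Fin k, supU X σX f u) ∧
    (∑ u : Fin n → Fin k, supU X σX f u) ≤ varConst X σX f n *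
      (∑ v : Fin n → Fin l,
        sSup ((fun y : Y => gfun X σX (fun z => ((π z : Y) : ℕ → Fin l)) f n (y : ℕ → Fin l)) ''
          cylSet Y v)) := by
  classical
  set πs : X → (ℕ → Fin l) := fun z => ((π z : Y) : ℕ → Fin l) with hπs
  have hτ : ∀ (x : X) (i : ℕ), πs x i = τ ((x : ℕ → Fin k) i) := hτπ
  -- fiberwise decomposition of the X-sum
  have hfib : (∑ u : Fin n → Fin k, supU X σX f u) =
      ∑ v : Fin n → Fin l, ∑ u ∈ Finset.univ.filter
        (fun u : Fin n → Fin k => (fun i => τ (u i)) = v), supU X σX f u := by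
    exact (Finset.sum_fiberwise_of_maps_to (fun u _ => Finset.mem_univ _) _).symm
  -- per-fiber comparison
  have hper : ∀ v : Fin n → Fin l,
      sSup ((fun y : Y => gfun X σX πs f n (y : ℕ → Fin l)) '' cylSet Y v) ≤
        (∑ u ∈ Finset.univ.filter
          (fun u : Fin n → Fin k => (fun i => τ (u i)) = v), supU X σX f u) ∧
      (∑ u ∈ Finset.univ.filter
          (fun u : Fin n → Fin k => (fun i => τ (u i)) = v), supU X σX f u) ≤
        varConst X σX f n *
          sSup ((fun y : Y => gfun X σX πs f n (y : ℕ → Fin l)) '' cylSet Y v) := by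
    intro v
    rcases Set.eq_empty_or_nonempty (cylSet Y v) with hYv | ⟨y₀, hy₀⟩
    · -- empty fiber: both sides zero
      have hzero : ∀ u ∈ Finset.univ.filter
          (fun u : Fin n → Fin k => (fun i => τ (u i)) = v), supU X σX f u = 0 := by
        intro u hu
        simp only [Finset.mem_filter, Finset.mem_univ, true_and] at hu
        apply supU_empty
        by_contra hne
        obtain ⟨x, hx⟩ := Set.nonempty_iff_ne_empty.mpr hne
        have : π x ∈ cylSet Y v := by
          intro i
          rw [hτπ x (i : ℕ), hx i]
          exact congrFun hu i
        rw [hYv] at this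
        exact this
      rw [Finset.sum_eq_zero hzero, hYv, Set.image_empty, Real.sSup_empty]
      simp
    · -- nonempty fiber
      have hconst : ∀ y ∈ cylSet Y v,
          gfun X σX πs f n (y : ℕ → Fin l) = gfun X σX πs f n ((y₀ : Y) : ℕ → Fin l) := by
        intro y hy
        exact gfun_congr σX f πs (fun i => by rw [hy i, ← hy₀ i])
      have himg : (fun y : Y => gfun X σX πs f n (y : ℕ → Fin l)) '' cylSet Y v =
          {gfun X σX πs f n ((y₀ : Y) : ℕ → Fin l)} := by
        apply Set.eq_singleton_iff_nonempty_unique_mem.mpr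
        refine ⟨⟨_, y₀, hy₀, hconst y₀ hy₀⟩, ?_⟩
        rintro r ⟨y, hy, rfl⟩
        exact hconst y hy
      rw [himg, csSup_singleton]
      -- the fiber sum equals the admissible sum
      have hsub : admisF X τ n ((y₀ : Y) : ℕ → Fin l) ⊆ Finset.univ.filter
          (fun u : Fin n → Fin k => (fun i => τ (u i)) = v) := by
        intro u hu
        rw [mem_admisF] at hu
        simp only [Finset.mem_filter, Finset.mem_univ, true_and]
        funext i
        rw [hu.2 i, hy₀ i]
      have hsumeq : (∑ u ∈ Finset.univ.filter
          (fun u : Fin n → Fin k => (fun i => τ (u i)) = v), supU X σX f u) =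
          ∑ u ∈ admisF X τ n ((y₀ : Y) : ℕ → Fin l), supU X σX f u := by
        symm
        apply Finset.sum_subset hsub
        intro u hu hnot
        simp only [Finset.mem_filter, Finset.mem_univ, true_and] at hu
        apply supU_empty
        by_contra hne
        apply hnot
        rw [mem_admisF]
        refine ⟨Set.nonempty_iff_ne_empty.mpr hne, fun i => ?_⟩
        rw [hy₀ i]
        exact congrFun hu i
      rw [hsumeq]
      exact ⟨gfun_le_sumSup σX f τ πs hb hτ n _,
        sumSup_le_var_mul_gfun σX f τ πs hb hτ n _⟩
  constructor
  · rw [hfib]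
    exact Finset.sum_le_sum (fun v _ => (hper v).1)
  · rw [hfib, Finset.mul_sum]
    exact Finset.sum_le_sum (fun v _ => (hper v).2)

end Aux6

section Aux7
variable {k : ℕ} {X : Set (ℕ → Fin k)}
variable (σX : X → X) (f : X → ℝ)

lemma varConst_le_exp {b : ℝ} (hb : ∀ x : X, |f x| ≤ b) (n : ℕ) :
    varConst X σX f n ≤ Real.exp (2 * (n * b)) := by
  apply Real.sSup_le
  · rintro r ⟨x, x', -, rfl⟩
    rw [← Real.exp_sub]
    apply Real.exp_le_exp.mpr
    have h1 := abs_le.mp (birk_abs_le σX f hb n x)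
    have h2 := abs_le.mp (birk_abs_le σX f hb n x')
    linarith [h1.1, h1.2, h2.1, h2.2]
  · positivity

lemma varConst_le_growth (hX : IsClosed X)
    (hσX : ∀ x : X, (σX x : ℕ → Fin k) = shiftMap (x : ℕ → Fin k))
    (hf : Continuous f) {b : ℝ} (hb0 : 0 ≤ b) (hb : ∀ x : X, |f x| ≤ b) {ε : ℝ} (hε : 0 < ε) :
    ∃ C : ℝ, 0 ≤ C ∧ ∀ n : ℕ, varConst X σX f n ≤ Real.exp (n * ε + C) := by
  classical
  obtain ⟨N, hN⟩ := varUC hX f hf ε hε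
  refine ⟨N * (2 * b), by positivity, fun n => ?_⟩
  have key : ∀ x x' : X, (∀ i : Fin n, (x : ℕ → Fin k) (i : ℕ) = (x' : ℕ → Fin k) (i : ℕ)) →
      birk σX f n x - birk σX f n x' ≤ n * ε + N * (2 * b) := by
    intro x x' hagree
    have hterm : ∀ i ∈ Finset.range n,
        f (σX^[i] x) - f (σX^[i] x') ≤ ε + (if i + N ≤ n then 0 else 2 * b) := by
      intro i hi
      rw [Finset.mem_range] at hi
      by_cases hc : i + N ≤ n
      · rw [if_pos hc]
        have hag : ∀ j < N, ((σX^[i] x : X) : ℕ → Fin k) j = ((σX^[i] x' : X) : ℕ → Fin k) j := by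
          intro j hj
          rw [iter_coord σX hσX i x j, iter_coord σX hσX i x' j]
          exact hagree ⟨j + i, by omega⟩
        have := hN _ _ hag
        have := abs_le.mp this
        linarith [this.1, this.2]
      · rw [if_neg hc]
        have h1 := abs_le.mp (hb (σX^[i] x))
        have h2 := abs_le.mp (hb (σX^[i] x'))
        linarith [h1.2, h2.1, hε.le]
    have hsum : birk σX f n x - birk σX f n x' =
        ∑ i ∈ Finset.range n, (f (σX^[i] x) - f (σX^[i] x')) := by
      rw [birk, birk, ← Finset.sum_sub_distrib]
    rw [hsum]
    calc ∑ i ∈ Finset.range n, (f (σX^[i] x) - f (σX^[i] x'))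
        ≤ ∑ i ∈ Finset.range n, (ε + (if i + N ≤ n then 0 else 2 * b)) :=
          Finset.sum_le_sum hterm
      _ = n * ε + ∑ i ∈ Finset.range n, (if i + N ≤ n then 0 else 2 * b) := by
          rw [Finset.sum_add_distrib]
          simp [mul_comm]
      _ ≤ n * ε + N * (2 * b) := by
          have : ∑ i ∈ Finset.range n, (if i + N ≤ n then (0:ℝ) else 2 * b) =
              ∑ i ∈ (Finset.range n).filter (fun i => ¬ (i + N ≤ n)), 2 * b := by
            rw [Finset.sum_filter]
            apply Finset.sum_congr rfl
            intro i _
            by_cases hc : i + N ≤ n <;> simp [hc]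
          rw [this, Finset.sum_const, nsmul_eq_mul]
          have hcard : ((Finset.range n).filter (fun i => ¬ (i + N ≤ n))).card ≤ N := by
            have hsub : (Finset.range n).filter (fun i => ¬ (i + N ≤ n)) ⊆
                Finset.Ico (n - N) n := by
              intro i hi
              simp only [Finset.mem_filter, Finset.mem_range, not_le] at hi
              rw [Finset.mem_Ico]
              omega
            calc ((Finset.range n).filter (fun i => ¬ (i + N ≤ n))).card
                ≤ (Finset.Ico (n - N) n).card := Finset.card_le_card hsub
              _ = n - (n - N) := Nat.card_Ico _ _
              _ ≤ N := by omega
          have := hcard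
          nlinarith [(Nat.cast_le (α := ℝ)).mpr hcard, hb0]
  apply Real.sSup_le
  · rintro r ⟨x, x', hagree, rfl⟩
    rw [← Real.exp_sub]
    exact Real.exp_le_exp.mpr (key x x' hagree)
  · positivity

lemma eventually_log_varConst (hX : IsClosed X)
    (hσX : ∀ x : X, (σX x : ℕ → Fin k) = shiftMap (x : ℕ → Fin k))
    (hf : Continuous f) {b : ℝ} (hb0 : 0 ≤ b) (hb : ∀ x : X, |f x| ≤ b) [Nonempty ↥X] {ε : ℝ}
    (hε : 0 < ε) :
    ∀ᶠ n : ℕ in Filter.atTop, Real.log (varConst X σX f n) ≤ n * ε := by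
  obtain ⟨C, hC0, hC⟩ := varConst_le_growth σX f hX hσX hf hb0 hb (half_pos hε)
  have hmain : ∀ n : ℕ, Real.log (varConst X σX f n) ≤ n * (ε / 2) + C := by
    intro n
    have hpos : 0 < varConst X σX f n :=
      lt_of_lt_of_le zero_lt_one (one_le_varConst σX f hb n)
    rw [Real.log_le_iff_le_exp hpos]
    exact hC n
  have hev : ∀ᶠ n : ℕ in Filter.atTop, C ≤ n * (ε / 2) := by
    rw [Filter.eventually_atTop]
    refine ⟨⌈C / (ε / 2)⌉₊, fun n hn => ?_⟩
    have h1 : C / (ε / 2) ≤ (n : ℝ) :=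
      le_trans (Nat.le_ceil _) (Nat.cast_le.mpr hn)
    rw [div_le_iff₀ (half_pos hε)] at h1
    exact h1
  filter_upwards [hev] with n hn
  calc Real.log (varConst X σX f n) ≤ n * (ε / 2) + C := hmain n
    _ ≤ n * (ε / 2) + n * (ε / 2) := by linarith
    _ = n * ε := by ring

lemma sumSupX_pos [Nonempty ↥X] {b : ℝ} (hb : ∀ x : X, |f x| ≤ b) (n : ℕ) :
    0 < ∑ u : Fin n → Fin k, supU X σX f u := by
  obtain ⟨x0⟩ := (inferInstance : Nonempty ↥X)
  have h1 : Real.exp (birk σX f n x0) ≤ supU X σX f (fun i : Fin n => (x0 : ℕ → Fin k) (i : ℕ)) :=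
    exp_le_supU σX f hb (fun i => rfl)
  have h2 : supU X σX f (fun i : Fin n => (x0 : ℕ → Fin k) (i : ℕ)) ≤
      ∑ u : Fin n → Fin k, supU X σX f u :=
    Finset.single_le_sum (fun u _ => supU_nonneg σX f u) (Finset.mem_univ _)
  calc (0:ℝ) < Real.exp (birk σX f n x0) := Real.exp_pos _
    _ ≤ _ := le_trans h1 h2

lemma supU_le_exp {b : ℝ} (hb : ∀ x : X, |f x| ≤ b) {n : ℕ} (u : Fin n → Fin k) :
    supU X σX f u ≤ Real.exp (n * b) := by
  apply Real.sSup_le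
  · rintro r ⟨z, -, rfl⟩
    exact Real.exp_le_exp.mpr (abs_le.mp (birk_abs_le σX f hb n z)).2
  · positivity

lemma exp_le_sumSupX [Nonempty ↥X] {b : ℝ} (hb : ∀ x : X, |f x| ≤ b) (n : ℕ) :
    Real.exp (-(n * b)) ≤ ∑ u : Fin n → Fin k, supU X σX f u := by
  obtain ⟨x0⟩ := (inferInstance : Nonempty ↥X)
  have h0 : Real.exp (-(n * b)) ≤ Real.exp (birk σX f n x0) :=
    Real.exp_le_exp.mpr (abs_le.mp (birk_abs_le σX f hb n x0)).1
  refine le_trans h0 (le_trans (exp_le_supU σX f hb (u := fun i : Fin n => (x0 : ℕ → Fin k) (i : ℕ)) (fun i => rfl)) ?_)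
  exact Finset.single_le_sum (fun u _ => supU_nonneg σX f u) (Finset.mem_univ _)

end Aux7

section Aux8

lemma limsup_eq_of_comp (a c : ℕ → ℝ) (B : ℝ)
    (hc_le : ∀ n, c n ≤ a n)
    (ha_le : ∀ ε : ℝ, 0 < ε → ∀ᶠ n in Filter.atTop, a n ≤ c n + ε)
    (hbdd_a : ∀ n, |a n| ≤ B) (hbdd_c : ∀ n, |c n| ≤ B) :
    Filter.limsup a Filter.atTop = Filter.limsup c Filter.atTop := by
  have hba : Filter.IsBoundedUnder (· ≤ ·) Filter.atTop a :=
    Filter.isBoundedUnder_of ⟨B, fun n => (abs_le.mp (hbdd_a n)).2⟩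
  have hbc : Filter.IsBoundedUnder (· ≤ ·) Filter.atTop c :=
    Filter.isBoundedUnder_of ⟨B, fun n => (abs_le.mp (hbdd_c n)).2⟩
  have hcoba : Filter.IsCoboundedUnder (· ≤ ·) Filter.atTop a :=
    (Filter.isBoundedUnder_of ⟨-B, fun n => (abs_le.mp (hbdd_a n)).1⟩ :
      Filter.IsBoundedUnder (· ≥ ·) Filter.atTop a).isCoboundedUnder_le
  have hcobc : Filter.IsCoboundedUnder (· ≤ ·) Filter.atTop c :=
    (Filter.isBoundedUnder_of ⟨-B, fun n => (abs_le.mp (hbdd_c n)).1⟩ :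
      Filter.IsBoundedUnder (· ≥ ·) Filter.atTop c).isCoboundedUnder_le
  apply le_antisymm
  · apply le_of_forall_pos_le_add
    intro ε hε
    have h1 := ha_le (ε/2) (half_pos hε)
    have h2 : ∀ᶠ n in Filter.atTop, c n < Filter.limsup c Filter.atTop + ε/2 :=
      Filter.eventually_lt_of_limsup_lt (lt_add_of_pos_right _ (half_pos hε)) hbc
    apply Filter.limsup_le_of_le hcoba
    filter_upwards [h1, h2] with n hn1 hn2
    calc a n ≤ c n + ε/2 := hn1
      _ ≤ Filter.limsup c Filter.atTop + ε/2 + ε/2 := by linarith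
      _ = Filter.limsup c Filter.atTop + ε := by ring
  · exact Filter.limsup_le_limsup (Filter.Eventually.of_forall hc_le) hcobc hba

end Aux8

theorem stmt17 {k l : ℕ}
    (X : Set (ℕ → Fin k)) (hX : IsSubshift X)
    (hSFT : IsSFT X) (hirr : IrreducibleSubshift X)
    (Y : Set (ℕ → Fin l)) (hY : IsSubshift Y)
    (σX : X → X) (hσX : ∀ x : X, (σX x : ℕ → Fin k) = shiftMap (x : ℕ → Fin k))
    (σY : Y → Y) (hσY : ∀ y : Y, (σY y : ℕ → Fin l) = shiftMap (y : ℕ → Fin l))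
    -- π is a one-block factor map
    (π : X → Y) (hπc : Continuous π) (hπs : Function.Surjective π)
    (hπcomm : ∀ x, π (σX x) = σY (π x))
    (hπ1 : ∃ τ : Fin k → Fin l, ∀ (x : X) (i : ℕ), (π x : ℕ → Fin l) i = τ ((x : ℕ → Fin k) i))
    (f : X → ℝ) (hf : Continuous f)
    -- μ is an invariant weak Gibbs measure for f, with constants Cn
    (μ : Measure X) (hμprob : IsProbabilityMeasure μ) (hμinv : MeasurePreserving σX μ μ)
    (Cn : ℕ → ℝ) (hCn : ∀ n, 0 < Cn n)
    (hCnlim : Tendsto (fun n : ℕ => (1 / (n : ℝ)) * Real.log (Cn n)) atTop (𝓝 0))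
    (hwG : ∀ (x : X) (n : ℕ),
      1 / Cn n ≤ (μ (cylPt X x n)).toReal /
        Real.exp (-(n * seqPressure X (fun n' z => Real.exp (birk σX f n' z))) + birk σX f n x) ∧
      (μ (cylPt X x n)).toReal /
        Real.exp (-(n * seqPressure X (fun n' z => Real.exp (birk σX f n' z))) + birk σX f n x)
        ≤ Cn n) :
    seqPressure X (fun n' z => Real.exp (birk σX f n' z)) =
      seqPressure Y (fun n y => gfun X σX (fun z => ((π z : ℕ → Fin l))) f n (y : ℕ → Fin l)) ∧
    ∀ (y : Y) (n : ℕ),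
      1 / (Cn n * varConst X σX f n) ≤ ((μ.map π) (cylPt Y y n)).toReal /
        (Real.exp (-(n * seqPressure Y
            (fun n' y' => gfun X σX (fun z => ((π z : ℕ → Fin l))) f n' (y' : ℕ → Fin l)))) *
          gfun X σX (fun z => ((π z : ℕ → Fin l))) f n (y : ℕ → Fin l)) ∧
      ((μ.map π) (cylPt Y y n)).toReal /
        (Real.exp (-(n * seqPressure Y
            (fun n' y' => gfun X σX (fun z => ((π z : ℕ → Fin l))) f n' (y' : ℕ → Fin l)))) *
          gfun X σX (fun z => ((π z : ℕ → Fin l))) f n (y : ℕ → Fin l))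
        ≤ Cn n * varConst X σX f n := by
  classical
  obtain ⟨τ, hτπ⟩ := hπ1
  haveI hne : Nonempty ↥X := by
    by_contra h
    rw [not_nonempty_iff] at h
    have h1 : μ Set.univ = 1 := hμprob.measure_univ
    rw [Set.univ_eq_empty_iff.mpr h, measure_empty] at h1
    exact zero_ne_one h1
  obtain ⟨b, hb0, hb⟩ := exists_bound hX.1 f hf
  have hk : 0 < k := by
    obtain ⟨x⟩ := hne
    exact ((x : ℕ → Fin k) 0).pos
  have hτ : ∀ (x : X) (i : ℕ), ((π x : Y) : ℕ → Fin l) i = τ ((x : ℕ → Fin k) i) := hτπ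
  set A : ℕ → ℝ := fun n => ∑ u : Fin n → Fin k, supU X σX f u with hAdef
  set S : ℕ → ℝ := fun n => ∑ v : Fin n → Fin l,
      sSup ((fun y : Y =>
        gfun X σX (fun z => ((π z : Y) : ℕ → Fin l)) f n (y : ℕ → Fin l)) '' cylSet Y v)
    with hSdef
  have hcomp := fun n => pressure_sum_comp σX f π τ hτπ hb n
  have hSA : ∀ n, S n ≤ A n := fun n => (hcomp n).1
  have hAS : ∀ n, A n ≤ varConst X σX f n * S n := fun n => (hcomp n).2
  have hApos : ∀ n, 0 < A n := fun n => sumSupX_pos σX f hb n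
  have hMn1 : ∀ n, (1:ℝ) ≤ varConst X σX f n := fun n => one_le_varConst σX f hb n
  have hMnpos : ∀ n, (0:ℝ) < varConst X σX f n :=
    fun n => lt_of_lt_of_le zero_lt_one (hMn1 n)
  have hSpos : ∀ n, 0 < S n := by
    intro n
    by_contra hcon
    push_neg at hcon
    nlinarith [hApos n, hMnpos n, hAS n]
  have hMn_ub : ∀ n : ℕ, varConst X σX f n ≤ Real.exp (2 * (n * b)) :=
    fun n => varConst_le_exp σX f hb n
  have hA_ub : ∀ n : ℕ, A n ≤ (k:ℝ)^n * Real.exp (n * b) := by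
    intro n
    calc A n ≤ (Finset.univ : Finset (Fin n → Fin k)).card • Real.exp (n * b) :=
          Finset.sum_le_card_nsmul _ _ _ (fun u _ => supU_le_exp σX f hb u)
      _ = (k:ℝ)^n * Real.exp (n * b) := by
          rw [Finset.card_univ, Fintype.card_fun, nsmul_eq_mul]
          simp
  have hA_lb : ∀ n : ℕ, Real.exp (-(n * b)) ≤ A n := fun n => exp_le_sumSupX σX f hb n
  have hlogk : (0:ℝ) ≤ Real.log k := Real.log_nonneg (by exact_mod_cast hk)
  have hlogA_ub : ∀ n : ℕ, Real.log (A n) ≤ n * Real.log k + n * b := by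
    intro n
    rw [Real.log_le_iff_le_exp (hApos n)]
    have hkR : (0:ℝ) < (k:ℝ) := by exact_mod_cast hk
    have : Real.exp ((n:ℝ) * Real.log k + (n:ℝ) * b) = (k:ℝ)^n * Real.exp (n * b) := by
      rw [Real.exp_add, Real.exp_nat_mul, Real.exp_log hkR]
    rw [this]
    exact hA_ub n
  have hlogA_lb : ∀ n : ℕ, -((n:ℝ) * b) ≤ Real.log (A n) :=
    fun n => (Real.le_log_iff_exp_le (hApos n)).mpr (hA_lb n)
  have hlogS_ub : ∀ n : ℕ, Real.log (S n) ≤ n * Real.log k + n * b :=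
    fun n => le_trans ((Real.log_le_log_iff (hSpos n) (hApos n)).mpr (hSA n)) (hlogA_ub n)
  have hlogMn_ub : ∀ n : ℕ, Real.log (varConst X σX f n) ≤ 2 * ((n:ℝ) * b) :=
    fun n => (Real.log_le_iff_le_exp (hMnpos n)).mpr (hMn_ub n)
  have hlogA_le_S : ∀ n : ℕ,
      Real.log (A n) ≤ Real.log (varConst X σX f n) + Real.log (S n) := by
    intro n
    have h := (Real.log_le_log_iff (hApos n) (mul_pos (hMnpos n) (hSpos n))).mpr (hAS n)
    rwa [Real.log_mul (ne_of_gt (hMnpos n)) (ne_of_gt (hSpos n))] at h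
  have hlogS_lb : ∀ n : ℕ, -((n:ℝ)*b) - 2*((n:ℝ)*b) ≤ Real.log (S n) := by
    intro n
    have h1 := hlogA_le_S n
    have h2 := hlogA_lb n
    have h3 := hlogMn_ub n
    linarith
  set B : ℝ := Real.log k + 3 * b + 1 with hBdef
  have hBpos : 0 < B := by positivity
  -- the four limsup comparison facts
  have hc_le : ∀ n : ℕ, (1/(n:ℝ)) * Real.log (S n) ≤ (1/(n:ℝ)) * Real.log (A n) :=
    fun n => mul_le_mul_of_nonneg_left
      ((Real.log_le_log_iff (hSpos n) (hApos n)).mpr (hSA n)) (by positivity)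
  have ha_le : ∀ ε : ℝ, 0 < ε → ∀ᶠ n : ℕ in Filter.atTop,
      (1/(n:ℝ)) * Real.log (A n) ≤ (1/(n:ℝ)) * Real.log (S n) + ε := by
    intro ε hε
    filter_upwards [eventually_log_varConst σX f hX.1 hσX hf hb0 hb hε,
      Filter.eventually_ge_atTop 1] with n hn hn1
    have hn0 : (0:ℝ) < (n:ℝ) := by exact_mod_cast hn1
    have hchain : Real.log (A n) ≤ Real.log (S n) + (n:ℝ) * ε := by
      have := hlogA_le_S n
      linarith
    calc (1/(n:ℝ)) * Real.log (A n) ≤ (1/(n:ℝ)) * (Real.log (S n) + (n:ℝ) * ε) :=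
          mul_le_mul_of_nonneg_left hchain (by positivity)
      _ = (1/(n:ℝ)) * Real.log (S n) + ε := by field_simp
  have hbd_a : ∀ n : ℕ, |(1/(n:ℝ)) * Real.log (A n)| ≤ B := by
    intro n
    rcases Nat.eq_zero_or_pos n with rfl | hn
    · simp only [Nat.cast_zero, div_zero, zero_mul, abs_zero]
      linarith
    · have hn0 : (0:ℝ) < (n:ℝ) := by exact_mod_cast hn
      rw [abs_le]
      constructor
      · have h1 : (1/(n:ℝ)) * (-((n:ℝ)*b)) ≤ (1/(n:ℝ)) * Real.log (A n) :=
          mul_le_mul_of_nonneg_left (hlogA_lb n) (by positivity)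
        have h2 : (1/(n:ℝ)) * (-((n:ℝ)*b)) = -b := by field_simp
        rw [h2] at h1
        linarith
      · have h1 : (1/(n:ℝ)) * Real.log (A n) ≤ (1/(n:ℝ)) * ((n:ℝ) * Real.log k + (n:ℝ)*b) :=
          mul_le_mul_of_nonneg_left (hlogA_ub n) (by positivity)
        have h2 : (1/(n:ℝ)) * ((n:ℝ) * Real.log k + (n:ℝ)*b) = Real.log k + b := by
          field_simp
        rw [h2] at h1
        linarith
  have hbd_c : ∀ n : ℕ, |(1/(n:ℝ)) * Real.log (S n)| ≤ B := by
    intro n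
    rcases Nat.eq_zero_or_pos n with rfl | hn
    · simp only [Nat.cast_zero, div_zero, zero_mul, abs_zero]
      linarith
    · have hn0 : (0:ℝ) < (n:ℝ) := by exact_mod_cast hn
      rw [abs_le]
      constructor
      · have h1 : (1/(n:ℝ)) * (-((n:ℝ)*b) - 2*((n:ℝ)*b)) ≤ (1/(n:ℝ)) * Real.log (S n) :=
          mul_le_mul_of_nonneg_left (hlogS_lb n) (by positivity)
        have h2 : (1/(n:ℝ)) * (-((n:ℝ)*b) - 2*((n:ℝ)*b)) = -(3*b) := by field_simp; ring
        rw [h2] at h1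
        linarith
      · have h1 : (1/(n:ℝ)) * Real.log (S n) ≤ (1/(n:ℝ)) * ((n:ℝ) * Real.log k + (n:ℝ)*b) :=
          mul_le_mul_of_nonneg_left (hlogS_ub n) (by positivity)
        have h2 : (1/(n:ℝ)) * ((n:ℝ) * Real.log k + (n:ℝ)*b) = Real.log k + b := by
          field_simp
        rw [h2] at h1
        linarith
  have hPart1 : seqPressure X (fun n' z => Real.exp (birk σX f n' z)) =
      seqPressure Y (fun n y => gfun X σX (fun z => ((π z : ℕ → Fin l))) f n (y : ℕ → Fin l)) := by
    unfold seqPressure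
    exact limsup_eq_of_comp (fun n => (1/(n:ℝ)) * Real.log (A n))
      (fun n => (1/(n:ℝ)) * Real.log (S n)) B hc_le ha_le hbd_a hbd_c
  refine ⟨hPart1, ?_⟩
  rw [← hPart1]
  intro y n
  set P := seqPressure X (fun n' z => Real.exp (birk σX f n' z)) with hPdef
  have hπm : Measurable π := hπc.measurable
  have hmap := map_cyl_eq_sum π hπm τ hτπ μ y n
  set T := ∑ u ∈ admisF X τ n (y : ℕ → Fin l), Real.exp (birk σX f n (repP X u)) with hTdef
  set Mn := varConst X σX f n with hMndef
  set g := gfun X σX (fun z => ((π z : ℕ → Fin l))) f n (y : ℕ → Fin l) with hgdef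
  have hub : ∀ u ∈ admisF X τ n (y : ℕ → Fin l), (μ (cylSet X u)).toReal ≤
      Cn n * (Real.exp (-((n:ℝ) * P)) * Real.exp (birk σX f n (repP X u))) := by
    intro u hu
    have hxu := repP_mem (X := X) (mem_admisF.mp hu).1
    rw [cylSet_eq_cylPt hxu]
    have h2 := (hwG (repP X u) n).2
    rw [div_le_iff₀ (Real.exp_pos _)] at h2
    rw [Real.exp_add] at h2
    exact h2
  have hlb : ∀ u ∈ admisF X τ n (y : ℕ → Fin l),
      (1 / Cn n) * (Real.exp (-((n:ℝ) * P)) * Real.exp (birk σX f n (repP X u))) ≤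
      (μ (cylSet X u)).toReal := by
    intro u hu
    have hxu := repP_mem (X := X) (mem_admisF.mp hu).1
    rw [cylSet_eq_cylPt hxu]
    have h1 := (hwG (repP X u) n).1
    rw [le_div_iff₀ (Real.exp_pos _)] at h1
    rw [Real.exp_add] at h1
    linarith
  have hMUB : ((μ.map π) (cylPt Y y n)).toReal ≤ Cn n * (Real.exp (-((n:ℝ) * P)) * T) := by
    rw [hmap]
    calc ∑ u ∈ admisF X τ n (y : ℕ → Fin l), (μ (cylSet X u)).toReal
        ≤ ∑ u ∈ admisF X τ n (y : ℕ → Fin l),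
            Cn n * (Real.exp (-((n:ℝ) * P)) * Real.exp (birk σX f n (repP X u))) :=
          Finset.sum_le_sum hub
      _ = Cn n * (Real.exp (-((n:ℝ) * P)) * T) := by
          rw [hTdef, Finset.mul_sum, Finset.mul_sum]
  have hMLB : (1 / Cn n) * (Real.exp (-((n:ℝ) * P)) * T) ≤
      ((μ.map π) (cylPt Y y n)).toReal := by
    rw [hmap]
    calc (1 / Cn n) * (Real.exp (-((n:ℝ) * P)) * T)
        = ∑ u ∈ admisF X τ n (y : ℕ → Fin l),
            (1 / Cn n) * (Real.exp (-((n:ℝ) * P)) * Real.exp (birk σX f n (repP X u))) := by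
          rw [hTdef, Finset.mul_sum, Finset.mul_sum]
      _ ≤ ∑ u ∈ admisF X τ n (y : ℕ → Fin l), (μ (cylSet X u)).toReal :=
          Finset.sum_le_sum hlb
  have hTg : T ≤ g := sum_rep_le_gfun σX f τ _ hb hτπ n (y : ℕ → Fin l)
  have hgT : g ≤ Mn * T := gfun_le_var_mul_sum_rep σX f τ _ hb hτπ n (y : ℕ → Fin l)
  have hTpos : 0 < T := by
    obtain ⟨x, hxy⟩ := hπs y
    have hu : (fun i : Fin n => (x : ℕ → Fin k) (i : ℕ)) ∈ admisF X τ n (y : ℕ → Fin l) := by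
      rw [mem_admisF]
      refine ⟨⟨x, fun i => rfl⟩, fun i => ?_⟩
      rw [← hτπ x (i : ℕ), hxy]
    calc (0:ℝ) < Real.exp (birk σX f n (repP X (fun i : Fin n => (x : ℕ → Fin k) (i : ℕ)))) :=
          Real.exp_pos _
      _ ≤ T := Finset.single_le_sum (f := fun u => Real.exp (birk σX f n (repP X u)))
          (fun u _ => (Real.exp_pos _).le) hu
  have hgpos : 0 < g := lt_of_lt_of_le hTpos hTg
  have hCnpos := hCn n
  have hMn1' : (1:ℝ) ≤ Mn := hMn1 n
  have hMnpos' : (0:ℝ) < Mn := hMnpos n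
  have he : (0:ℝ) < Real.exp (-((n:ℝ) * P)) := Real.exp_pos _
  have hD : (0:ℝ) < Real.exp (-((n:ℝ) * P)) * g := by positivity
  constructor
  · rw [le_div_iff₀ hD]
    calc 1 / (Cn n * Mn) * (Real.exp (-((n:ℝ) * P)) * g)
        ≤ 1 / (Cn n * Mn) * (Real.exp (-((n:ℝ) * P)) * (Mn * T)) := by gcongr
      _ = 1 / Cn n * (Real.exp (-((n:ℝ) * P)) * T) := by
          field_simp
      _ ≤ ((μ.map π) (cylPt Y y n)).toReal := hMLB
  · rw [div_le_iff₀ hD]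
    calc ((μ.map π) (cylPt Y y n)).toReal
        ≤ Cn n * (Real.exp (-((n:ℝ) * P)) * T) := hMUB
      _ ≤ Cn n * (Real.exp (-((n:ℝ) * P)) * g) := by gcongr
      _ ≤ Cn n * Mn * (Real.exp (-((n:ℝ) * P)) * g) := by
          nlinarith [mul_pos hCnpos (mul_pos he hgpos), hMn1']
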